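/- Let A be a real fermionic Novikov algebra with an invariant Lorentzian (signature (n-1,1)) non-degenerate symmetric bilinear form. Then either A·A = 0, or dim(A·A) = 1 and there exist elements such that the product is given on a suitable basis e₁,…,eₙ by exactly one of: e₁e₁ = e₂, or e₁e₂ = e₂, or e₁e₃ = e₂, with all other products of basis vectors zero. -/

import Mathlib

open Module Submodule in
lemma aux_surj {A : Type*} [AddCommGroup A] [Module ℝ A] {k : ℕ}
    (f : Fin k → (A →ₗ[ℝ] ℝ))
    (hind : ∀ c : Fin k → ℝ, (∀ x, ∑ i, c i * f i x = 0) → ∀ i, c i = 0) :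
    ∀ c : Fin k → ℝ, ∃ x, ∀ i, f i x = c i := by
  set T : A →ₗ[ℝ] (Fin k → ℝ) := LinearMap.pi f with hT
  suffices hs : LinearMap.range T = ⊤ by
    intro c
    obtain ⟨x, hx⟩ := (LinearMap.range_eq_top.mp hs) c
    exact ⟨x, fun i => by rw [← hx]; rfl⟩
  by_contra hne
  obtain ⟨g, hg0, hg⟩ := Submodule.exists_dual_map_eq_bot_of_lt_top
    (lt_top_iff_ne_top.mpr hne) inferInstance
  have hgU : ∀ x : A, g (T x) = 0 := by
    intro x
    have : g (T x) ∈ (LinearMap.range T).map g := ⟨T x, ⟨x, rfl⟩, rfl⟩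
    rw [hg] at this
    simpa using this
  set c : Fin k → ℝ := fun i => g (Pi.single i 1) with hc
  have key : ∀ v : Fin k → ℝ, g v = ∑ i, v i * c i := by
    intro v
    have hv : v = ∑ i, v i • (Pi.single i (1:ℝ) : Fin k → ℝ) := by
      funext j
      simp [Finset.sum_apply, Pi.single_apply]
    conv_lhs => rw [hv]
    simp [mul_comm, hc]
  have hc0 : ∀ i, c i = 0 := by
    refine hind c (fun x => ?_)
    have := hgU x
    rw [key (T x)] at this
    simpa [hT, mul_comm] using this
  apply hg0
  apply LinearMap.ext
  intro v
  rw [key v]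
  simp [hc0]


open Module Submodule in
lemma aux_basis {A : Type*} [AddCommGroup A] [Module ℝ A] [FiniteDimensional ℝ A]
    {n k : ℕ} (hnA : Module.finrank ℝ A = n)
    (f : Fin k → (A →ₗ[ℝ] ℝ))
    (hind : ∀ c : Fin k → ℝ, (∀ x, ∑ i, c i * f i x = 0) → ∀ i, c i = 0)
    (e : A) (t : Fin k) (he : ∀ i, f i e = if i = t then 1 else 0) :
    ∃ (hk : k ≤ n) (b : Basis (Fin n) ℝ A),
      (∀ x (i : Fin k), b.repr x (Fin.castLE hk i) = f i x) ∧ b (Fin.castLE hk t) = e := by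
  set T : A →ₗ[ℝ] (Fin k → ℝ) := LinearMap.pi f with hT
  have hTapp : ∀ x i, T x i = f i x := fun x i => rfl
  have hsurj : LinearMap.range T = ⊤ := by
    rw [LinearMap.range_eq_top]
    intro c
    obtain ⟨x, hx⟩ := aux_surj f hind c
    exact ⟨x, funext fun i => hx i⟩
  have hTe : T e = Pi.single t 1 := by
    funext i
    simp only [hTapp, he i, Pi.single_apply]
  -- rank-nullity
  have hrk : k + Module.finrank ℝ (LinearMap.ker T) = n := by
    have h1 := LinearMap.finrank_range_add_finrank_ker T
    rw [hsurj] at h1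
    rw [finrank_top] at h1
    simp [Module.finrank_pi, hnA] at h1
    omega
  have hk : k ≤ n := by omega
  have hkerrk : Module.finrank ℝ (LinearMap.ker T) = n - k := by omega
  -- section
  obtain ⟨σ₀, hσ₀⟩ := T.exists_rightInverse_of_surjective hsurj
  have hσ₀' : ∀ c, T (σ₀ c) = c := fun c => congrFun (congrArg DFunLike.coe hσ₀) c
  set σ : (Fin k → ℝ) →ₗ[ℝ] A :=
    σ₀ + (LinearMap.proj t).smulRight (e - σ₀ (Pi.single t 1)) with hσ
  have hσ' : ∀ c, T (σ c) = c := by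
    intro c
    simp only [hσ, LinearMap.add_apply, map_add, LinearMap.smulRight_apply, LinearMap.proj_apply,
      map_smul, map_sub, hσ₀', hTe]
    simp
  have hσsingle : σ (Pi.single t 1) = e := by
    simp [hσ, LinearMap.smulRight_apply]
  -- the equivalence A ≃ (Fin k → ℝ) × ker T
  set F : A →ₗ[ℝ] (Fin k → ℝ) × (LinearMap.ker T) :=
    LinearMap.prod T ((LinearMap.id - σ ∘ₗ T).codRestrict (LinearMap.ker T)
      (fun x => by simp [LinearMap.mem_ker, hσ'])) with hF
  set G : ((Fin k → ℝ) × (LinearMap.ker T)) →ₗ[ℝ] A :=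
    σ ∘ₗ (LinearMap.fst ℝ _ _) + (LinearMap.ker T).subtype ∘ₗ (LinearMap.snd ℝ _ _) with hG
  have hFG : F ∘ₗ G = LinearMap.id := by
    apply LinearMap.ext
    rintro ⟨c, w, hw⟩
    rw [LinearMap.mem_ker] at hw
    apply Prod.ext
    · simp [hF, hG, hσ', hw]
    · apply Subtype.ext
      simp [hF, hG, hσ', hw, LinearMap.codRestrict_apply]
  have hGF : G ∘ₗ F = LinearMap.id := by
    apply LinearMap.ext
    intro x
    simp [hF, hG, LinearMap.codRestrict_apply]
  set E : A ≃ₗ[ℝ] ((Fin k → ℝ) × (LinearMap.ker T)) := LinearEquiv.ofLinear F G hFG hGF with hE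
  -- bases
  set w : Basis (Fin (n - k)) ℝ (LinearMap.ker T) := finBasisOfFinrankEq ℝ _ hkerrk with hw
  set pb : Basis (Fin k ⊕ Fin (n - k)) ℝ ((Fin k → ℝ) × (LinearMap.ker T)) :=
    (Pi.basisFun ℝ (Fin k)).prod w with hpb
  set ι : (Fin k ⊕ Fin (n - k)) ≃ Fin n := finSumFinEquiv.trans (finCongr (by omega)) with hι
  set b : Basis (Fin n) ℝ A := ((pb.map E.symm).reindex ι) with hb
  have hcast : ∀ i : Fin k, ι (Sum.inl i) = Fin.castLE hk i := by
    intro i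
    apply Fin.ext
    simp [hι]
  refine ⟨hk, b, ?_, ?_⟩
  · intro x i
    rw [← hcast i]
    rw [hb, Basis.repr_reindex_apply]
    rw [Basis.map_repr]
    simp only [LinearEquiv.trans_apply, LinearEquiv.symm_symm, Equiv.symm_apply_apply]
    rw [Basis.prod_repr_inl]
    have : (E x).1 = T x := rfl
    simp [this, Pi.basisFun_repr, hTapp]
  · rw [← hcast t, hb, Basis.reindex_apply]
    simp only [Equiv.symm_apply_apply]
    rw [Basis.map_apply]
    have hpbt : pb (Sum.inl t) = (Pi.single t 1, 0) := by
      apply Prod.ext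
      · rw [hpb, Basis.prod_apply_inl_fst]; simp [Pi.basisFun_apply]
      · rw [hpb, Basis.prod_apply_inl_snd]
    rw [hpbt]
    show G (Pi.single t 1, 0) = e
    simp [hG, hσsingle]


lemma aux_iso {A : Type*} [AddCommGroup A] [Module ℝ A] {n : ℕ}
    (B : A →ₗ[ℝ] A →ₗ[ℝ] ℝ)
    (b₀ : Module.Basis (Fin n) ℝ A)
    (hdiag : ∀ i : Fin n, B (b₀ i) (b₀ i) = if (i : ℕ) < 1 then -1 else 1)
    (horth : ∀ i j : Fin n, i ≠ j → B (b₀ i) (b₀ j) = 0)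
    (hn : 0 < n) (u : A) (h0 : b₀.repr u ⟨0, hn⟩ = 0) (hBu : B u u = 0) : u = 0 := by
  have hexp : B u u = ∑ i, (b₀.repr u i)^2 * (if (i : ℕ) < 1 then -1 else 1) := by
    conv_lhs => rw [← b₀.sum_repr u]
    rw [map_sum]
    refine Finset.sum_congr rfl (fun i _ => ?_)
    rw [map_smul, map_sum, LinearMap.sum_apply, Finset.smul_sum]
    rw [Finset.sum_eq_single i]
    · rw [map_smul, LinearMap.smul_apply, hdiag i]
      simp [smul_eq_mul]; ring_nf
    · intro j _ hj
      rw [map_smul, LinearMap.smul_apply, horth j i hj]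
      simp
    · intro h; exact absurd (Finset.mem_univ i) h
  rw [hexp] at hBu
  have hterm : ∀ i : Fin n, (b₀.repr u i)^2 * (if (i : ℕ) < 1 then -1 else 1)
      = (b₀.repr u i)^2 := by
    intro i
    by_cases hi : (i : ℕ) < 1
    · have hi0 : (i : ℕ) = 0 := by omega
      have : i = ⟨0, hn⟩ := Fin.ext (by simp [hi0])
      rw [this, h0]; simp
    · simp [hi]
  rw [Finset.sum_congr rfl (fun i _ => hterm i)] at hBu
  have hz : ∀ i : Fin n, (b₀.repr u i)^2 = 0 := by
    intro i
    have := Finset.sum_eq_zero_iff_of_nonneg (fun j _ => sq_nonneg (b₀.repr u j)) |>.mp hBu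
    exact this i (Finset.mem_univ i)
  have : ∀ i, b₀.repr u i = 0 := fun i => pow_eq_zero_iff (n := 2) (by norm_num) |>.mp (hz i)
  have : b₀.repr u = 0 := Finsupp.ext this
  simpa using congrArg b₀.repr.symm this



set_option maxHeartbeats 1000000 in
/-- A real fermionic Novikov algebra with an invariant Lorentzian (signature `(n-1,1)`)
non-degenerate symmetric bilinear form has either zero product, or `dim(A·A) = 1` with the
product given on a suitable basis `e₁,…,eₙ` by exactly one of `e₁e₁ = e₂`, `e₁e₂ = e₂`,
`e₁e₃ = e₂` (all other products of basis vectors zero). -/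
theorem stmt_19 {A : Type*} [AddCommGroup A] [Module ℝ A] [FiniteDimensional ℝ A]
    {n : ℕ}
    (mul : A →ₗ[ℝ] A →ₗ[ℝ] A)
    (hls : ∀ x y z : A, mul (mul x y) z - mul x (mul y z)
      = mul (mul y x) z - mul y (mul x z))
    (hferm : ∀ x y z : A, mul (mul x y) z = - mul (mul x z) y)
    (B : A →ₗ[ℝ] A →ₗ[ℝ] ℝ)
    (hsymm : ∀ u v : A, B u v = B v u)
    (hnondeg : ∀ v : A, (∀ w : A, B v w = 0) → v = 0)
    (hinv : ∀ x y z : A, B (mul y x) z = B y (mul z x))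
    (b₀ : Module.Basis (Fin n) ℝ A)
    (hdiag : ∀ i : Fin n, B (b₀ i) (b₀ i) = if (i : ℕ) < 1 then -1 else 1)
    (horth : ∀ i j : Fin n, i ≠ j → B (b₀ i) (b₀ j) = 0) :
    (∀ x y : A, mul x y = 0) ∨
    (Module.finrank ℝ (Submodule.span ℝ {w : A | ∃ a b : A, w = mul a b}) = 1 ∧
      ∃ b : Module.Basis (Fin n) ℝ A,
        (∃ h : 2 ≤ n, ∀ x y : A,
          mul x y = (b.repr x ⟨0, by omega⟩ * b.repr y ⟨0, by omega⟩) • b ⟨1, by omega⟩) ∨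
        (∃ h : 2 ≤ n, ∀ x y : A,
          mul x y = (b.repr x ⟨0, by omega⟩ * b.repr y ⟨1, by omega⟩) • b ⟨1, by omega⟩) ∨
        (∃ h : 3 ≤ n, ∀ x y : A,
          mul x y = (b.repr x ⟨0, by omega⟩ * b.repr y ⟨2, by omega⟩) • b ⟨1, by omega⟩)) := by
  by_cases hzero : ∀ x y : A, mul x y = 0
  · exact Or.inl hzero
  right
  push_neg at hzero
  obtain ⟨a, b, hab⟩ := hzero
  have hnA : Module.finrank ℝ A = n := by
    rw [Module.finrank_eq_card_basis b₀, Fintype.card_fin]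
  have hn : 0 < n := by
    by_contra h
    have hn0 : n = 0 := by omega
    subst hn0
    haveI : Subsingleton (Fin 0 →₀ ℝ) := inferInstance
    haveI := Equiv.subsingleton b₀.repr.toEquiv
    exact hab (Subsingleton.elim _ _)
  set i0 : Fin n := ⟨0, hn⟩ with hi0
  -- algebraic identities
  have hRsq : ∀ x y : A, mul (mul x y) y = 0 := by
    intro x y
    have h := hferm x y y
    have h2 : (2:ℝ) • mul (mul x y) y = 0 := by
      rw [two_smul]
      nth_rewrite 2 [h]
      simp
    simpa using (smul_eq_zero.mp h2).resolve_left (by norm_num)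
  have hA : ∀ x y z : A, B (mul y x) (mul z x) = 0 := by
    intro x y z
    rw [hinv x y (mul z x), hRsq z x]
    simp
  have hcross : ∀ w x y z : A, B (mul y x) (mul z w) = - B (mul y w) (mul z x) := by
    intro w x y z
    rw [hinv x y (mul z w), hferm z w x, map_neg, ← hinv w y (mul z x)]
  set e := mul a b with hedef
  have hee : B e e = 0 := hA b a a
  have he0 : b₀.repr e i0 ≠ 0 := by
    intro h
    exact hab (aux_iso B b₀ hdiag horth hn e h hee)
  have hdep : ∀ u v : A, B u u = 0 → B v v = 0 → B u v = 0 →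
      (b₀.repr u i0) • v = (b₀.repr v i0) • u := by
    intro u v huu hvv huv
    have hvu : B v u = 0 := (hsymm v u).trans huv
    set w := (b₀.repr u i0) • v - (b₀.repr v i0) • u with hwdef
    have hw0 : b₀.repr w i0 = 0 := by
      simp only [hwdef, map_sub, map_smul, Finsupp.sub_apply, Finsupp.smul_apply, smul_eq_mul]
      ring
    have hww : B w w = 0 := by
      simp only [hwdef, map_sub, map_smul, LinearMap.sub_apply, LinearMap.smul_apply,
        smul_eq_mul, huu, hvv, huv, hvu]
      ring
    have := aux_iso B b₀ hdiag horth hn w hw0 hww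
    exact sub_eq_zero.mp this
  have horthe : ∀ z x : A, B e (mul z x) = 0 := by
    intro z x
    have h1 : B e (mul z x) = - B (mul a x) (mul z b) := hcross x b a z
    have h2 : (b₀.repr e i0) • (mul z b) = (b₀.repr (mul z b) i0) • e :=
      hdep e (mul z b) hee (hA b z z) (hA b a z)
    have h3 : B (mul a x) e = 0 := by
      have hc := hcross b x a a
      rw [hsymm (mul a b) (mul a x)] at hc
      rw [hedef]
      linarith
    have h4 : B (mul a x) (mul z b) = 0 := by
      have h5 := congrArg (fun v => B (mul a x) v) h2
      simp only [map_smul, smul_eq_mul] at h5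
      rw [h3, mul_zero] at h5
      rcases mul_eq_zero.mp h5 with h | h
      · exact absurd h he0
      · exact h
    rw [h1, h4, neg_zero]
  have hprop : ∀ x y : A, (b₀.repr e i0) • (mul x y) = (b₀.repr (mul x y) i0) • e :=
    fun x y => hdep e (mul x y) hee (hA y x x) (horthe x y)
  set e₀ := b₀.repr e i0 with he₀
  set c : A →ₗ[ℝ] A →ₗ[ℝ] ℝ := e₀⁻¹ • (mul.compr₂ (b₀.coord i0)) with hc
  have hcval : ∀ x y : A, c x y = e₀⁻¹ * b₀.repr (mul x y) i0 := by
    intro x y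
    simp [hc, LinearMap.compr₂_apply, Module.Basis.coord_apply]
  have hmulc : ∀ x y : A, mul x y = (c x y) • e := by
    intro x y
    rw [hcval, mul_smul, ← hprop x y, smul_smul, inv_mul_cancel₀ he0, one_smul]
  have hinv2 : ∀ x y z : A, c y x * B e z = c z x * B e y := by
    intro x y z
    have h := hinv x y z
    rw [hmulc y x, hmulc z x] at h
    rw [LinearMap.map_smul₂, LinearMap.smul_apply, map_smul, smul_eq_mul, smul_eq_mul] at h
    rw [hsymm y e] at h
    exact h
  obtain ⟨y', hy'⟩ : ∃ y', B e y' ≠ 0 := by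
    by_contra h
    push_neg at h
    exact hab (hnondeg e h)
  set φ : A →ₗ[ℝ] ℝ := B e with hφ
  set ψ : A →ₗ[ℝ] ℝ := (B e y')⁻¹ • (c y') with hψ
  have hψval : ∀ y, ψ y = (B e y')⁻¹ * c y' y := fun y => rfl
  have hmain : ∀ x y : A, mul x y = (φ x * ψ y) • e := by
    intro x y
    rw [hmulc x y]
    congr 1
    have h := hinv2 y x y'
    have : φ x = B e x := rfl
    rw [hψval, this]
    field_simp
    rw [eq_div_iff (show B e y' ≠ 0 from hy')]
    simp only [hφ] at h
    linarith
  have hφe : φ e = 0 := hee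
  have hψφab : φ a * ψ b = 1 := by
    have h := hmain a b
    rw [← hedef] at h
    have h2 : (φ a * ψ b - 1) • e = 0 := by
      rw [sub_smul, one_smul, ← h, sub_self]
    rcases smul_eq_zero.mp h2 with h3 | h3
    · linarith [h3]
    · exact absurd h3 hab
  have hφa : φ a ≠ 0 := left_ne_zero_of_mul (by rw [hψφab]; norm_num)
  have hψb : ψ b ≠ 0 := right_ne_zero_of_mul (by rw [hψφab]; norm_num)
  constructor
  · have hspan : Submodule.span ℝ {w : A | ∃ a b : A, w = mul a b}
        = Submodule.span ℝ {e} := by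
      apply le_antisymm
      · rw [Submodule.span_le]
        rintro w ⟨x, y, rfl⟩
        rw [hmulc x y]
        exact Submodule.smul_mem _ _ (Submodule.subset_span rfl)
      · rw [Submodule.span_le]
        intro w hw
        rw [Set.mem_singleton_iff] at hw
        subst hw
        exact Submodule.subset_span ⟨a, b, hedef⟩
    rw [hspan]
    exact finrank_span_singleton hab
  -- pointwise independence helper in the independent case
  by_cases hdep2 : ∃ t : ℝ, ψ = t • φ
  · -- case 1 : e₁e₁ = e₂
    obtain ⟨t, ht⟩ := hdep2
    have ht0 : t ≠ 0 := by
      intro h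
      rw [h, zero_smul] at ht
      rw [ht] at hψb
      simp at hψb
    set u := t • e with hu
    have hu0 : u ≠ 0 := smul_ne_zero ht0 hab
    have hmul1 : ∀ x y : A, mul x y = (φ x * φ y) • u := by
      intro x y
      rw [hmain x y, ht, hu]
      simp only [LinearMap.smul_apply, smul_eq_mul, smul_smul]
      ring_nf
    have hφu : φ u = 0 := by
      rw [hu, map_smul, smul_eq_mul, hφe, mul_zero]
    obtain ⟨z, hz⟩ : ∃ z, B u z ≠ 0 := by
      by_contra h
      push_neg at h
      exact hu0 (hnondeg u h)
    set χ : A →ₗ[ℝ] ℝ := (B u z)⁻¹ • (B.flip z) with hχ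
    have hχu : χ u = 1 := by
      simp only [hχ, LinearMap.smul_apply, LinearMap.flip_apply, smul_eq_mul]
      exact inv_mul_cancel₀ hz
    set f : Fin 2 → (A →ₗ[ℝ] ℝ) := ![φ, χ] with hf
    have hind : ∀ cc : Fin 2 → ℝ, (∀ x, ∑ i, cc i * f i x = 0) → ∀ i, cc i = 0 := by
      intro cc hcc
      have h1 := hcc u
      rw [Fin.sum_univ_two] at h1
      simp only [hf, Matrix.cons_val_zero, Matrix.cons_val_one, Matrix.head_cons,
        hφu, hχu, mul_zero, mul_one, zero_add] at h1
      have h2 := hcc a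
      rw [Fin.sum_univ_two, h1] at h2
      simp only [hf, Matrix.cons_val_zero, zero_mul, add_zero] at h2
      have h3 : cc 0 = 0 := by
        rcases mul_eq_zero.mp h2 with h | h
        · exact h
        · exact absurd h hφa
      intro i
      fin_cases i
      · exact h3
      · exact h1
    have he2 : ∀ i, f i u = if i = 1 then 1 else 0 := by
      intro i
      fin_cases i <;> simp [hf, hφu, hχu]
    obtain ⟨hk, bb, hrepr, hbt⟩ := aux_basis hnA f hind u 1 he2
    refine ⟨bb, Or.inl ⟨hk, ?_⟩⟩
    intro x y
    have h0eq : (⟨0, by omega⟩ : Fin n) = Fin.castLE hk 0 := Fin.ext rfl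
    have h1eq : (⟨1, by omega⟩ : Fin n) = Fin.castLE hk 1 := Fin.ext rfl
    rw [hmul1 x y, h0eq, h1eq, hrepr x 0, hrepr y 0, hbt]
    simp [hf]
  · -- φ, ψ pointwise independent
    have hindep : ∀ c0 c1 : ℝ, (∀ x, c0 * φ x + c1 * ψ x = 0) → c0 = 0 ∧ c1 = 0 := by
      intro c0 c1 h
      have hc1 : c1 = 0 := by
        by_contra hc1
        apply hdep2
        refine ⟨-c0 / c1, ?_⟩
        apply LinearMap.ext
        intro x
        have := h x
        simp only [LinearMap.smul_apply, smul_eq_mul]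
        field_simp
        linarith
      refine ⟨?_, hc1⟩
      have h2 := h a
      rw [hc1, zero_mul, add_zero] at h2
      rcases mul_eq_zero.mp h2 with h | h
      · exact h
      · exact absurd h hφa
    by_cases hκ : ψ e = 0
    · -- case 3 : e₁e₃ = e₂
      set χ : A →ₗ[ℝ] ℝ := (B e y')⁻¹ • (B.flip y') with hχ
      have hχe : χ e = 1 := by
        simp only [hχ, LinearMap.smul_apply, LinearMap.flip_apply, smul_eq_mul]
        exact inv_mul_cancel₀ hy'
      set f : Fin 3 → (A →ₗ[ℝ] ℝ) := ![φ, χ, ψ] with hf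
      have hind : ∀ cc : Fin 3 → ℝ, (∀ x, ∑ i, cc i * f i x = 0) → ∀ i, cc i = 0 := by
        intro cc hcc
        have h1 := hcc e
        rw [Fin.sum_univ_three] at h1
        simp only [hf, Matrix.cons_val_zero, Matrix.cons_val_one, Matrix.head_cons,
          Matrix.cons_val_two, Matrix.tail_cons, hφe, hχe, hκ, mul_zero, mul_one,
          zero_add, add_zero] at h1
        have h2 : ∀ x, cc 0 * φ x + cc 2 * ψ x = 0 := by
          intro x
          have h3 := hcc x
          rw [Fin.sum_univ_three, h1] at h3
          simpa [hf] using h3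
        obtain ⟨h4, h5⟩ := hindep _ _ h2
        intro i
        fin_cases i
        · exact h4
        · exact h1
        · exact h5
      have he3 : ∀ i, f i e = if i = 1 then 1 else 0 := by
        intro i
        fin_cases i <;> simp [hf, hφe, hχe, hκ]
      obtain ⟨hk, bb, hrepr, hbt⟩ := aux_basis hnA f hind e 1 he3
      refine ⟨bb, Or.inr (Or.inr ⟨hk, ?_⟩)⟩
      intro x y
      have h0eq : (⟨0, by omega⟩ : Fin n) = Fin.castLE hk 0 := Fin.ext rfl
      have h1eq : (⟨1, by omega⟩ : Fin n) = Fin.castLE hk 1 := Fin.ext rfl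
      have h2eq : (⟨2, by omega⟩ : Fin n) = Fin.castLE hk 2 := Fin.ext rfl
      rw [hmain x y, h0eq, h1eq, h2eq, hrepr x 0, hrepr y 2, hbt]
      simp [hf]
    · -- case 2 : e₁e₂ = e₂
      set f : Fin 2 → (A →ₗ[ℝ] ℝ) := ![(ψ e) • φ, (ψ e)⁻¹ • ψ] with hf
      have hind : ∀ cc : Fin 2 → ℝ, (∀ x, ∑ i, cc i * f i x = 0) → ∀ i, cc i = 0 := by
        intro cc hcc
        have h2 : ∀ x, (cc 0 * ψ e) * φ x + (cc 1 * (ψ e)⁻¹) * ψ x = 0 := by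
          intro x
          have h3 := hcc x
          rw [Fin.sum_univ_two] at h3
          simp only [hf, Matrix.cons_val_zero, Matrix.cons_val_one, Matrix.head_cons,
            LinearMap.smul_apply, smul_eq_mul] at h3
          linear_combination h3
        obtain ⟨h4, h5⟩ := hindep _ _ h2
        intro i
        fin_cases i
        · rcases mul_eq_zero.mp h4 with h | h
          · exact h
          · exact absurd h hκ
        · rcases mul_eq_zero.mp h5 with h | h
          · exact h
          · exact absurd h (inv_ne_zero hκ)
      have he2 : ∀ i, f i e = if i = 1 then 1 else 0 := by
        intro i
        fin_cases i <;> simp [hf, hφe, inv_mul_cancel₀ hκ]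
      obtain ⟨hk, bb, hrepr, hbt⟩ := aux_basis hnA f hind e 1 he2
      refine ⟨bb, Or.inr (Or.inl ⟨hk, ?_⟩)⟩
      intro x y
      have h0eq : (⟨0, by omega⟩ : Fin n) = Fin.castLE hk 0 := Fin.ext rfl
      have h1eq : (⟨1, by omega⟩ : Fin n) = Fin.castLE hk 1 := Fin.ext rfl
      rw [hmain x y, h0eq, h1eq, hrepr x 0, hrepr y 1, hbt]
      simp only [hf, Matrix.cons_val_zero, Matrix.cons_val_one, Matrix.head_cons,
        LinearMap.smul_apply, smul_eq_mul]
      rw [show ψ e * φ x * ((ψ e)⁻¹ * ψ y) = (ψ e * (ψ e)⁻¹) * (φ x * ψ y) by ring,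
        mul_inv_cancel₀ hκ, one_mul]
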